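/- arXiv:1509.07045 — 5 statements merged into one kernel-verified Lean document; each statement's English description precedes it below -/
import Mathlib

section
/- Let F denote the set of finitely supported sequences of nonnegative integers indexed by ℕ, and let ρ = (ρ_j)_{j≥1} be a sequence of reals with ρ_j > 1 for all j and (ρ_j^{-1})_{j≥1} ∈ ℓ^q for some 0 < q < ∞. Then the family (ρ^{-qν})_{ν∈F}, where ρ^{ν} := ∏_{j≥1} ρ_j^{ν_j}, is summable, and its sum equals ∏_{j≥1} (1 - ρ_j^{-q})^{-1}. -/
open Finset Set

/-- Sum of the multi-geometric series over finsupps supported in a finset. -/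
lemma aux_hasSum_indicator (a : ℕ → ℝ) (h0 : ∀ j, 0 ≤ a j) (h1 : ∀ j, a j < 1)
    (s : Finset ℕ) :
    HasSum (Set.indicator {ν : ℕ →₀ ℕ | (ν.support : Set ℕ) ⊆ (s : Set ℕ)}
        (fun ν => ν.prod fun j n => a j ^ n))
      (∏ j ∈ s, (1 - a j)⁻¹) := by
  classical
  induction s using Finset.induction with
  | empty =>
    have : Set.indicator {ν : ℕ →₀ ℕ | (ν.support : Set ℕ) ⊆ ((∅ : Finset ℕ) : Set ℕ)}
        (fun ν => ν.prod fun j n => a j ^ n) =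
        fun ν : ℕ →₀ ℕ => if ν = 0 then (1 : ℝ) else 0 := by
      funext ν
      by_cases hν : ν = 0
      · subst hν
        simp [Set.indicator]
      · rw [Set.indicator_of_notMem]
        · simp [hν]
        · simp only [Set.mem_setOf_eq, Finset.coe_empty, Set.subset_empty_iff,
            Finset.coe_eq_empty, Finsupp.support_eq_empty]
          exact hν
    rw [this]
    simpa using hasSum_ite_eq (0 : ℕ →₀ ℕ) (1 : ℝ)
  | @insert k s hk ih =>
    rw [← hasSum_subtype_iff_indicator] at ih ⊢
    -- the equivalence
    set F : (ℕ →₀ ℕ) → ℝ := fun ν => ν.prod fun j n => a j ^ n with hF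
    have hzero : ∀ j : ℕ, a j ^ (0 : ℕ) = 1 := fun j => pow_zero _
    have hadd : ∀ (j : ℕ) (m n : ℕ), a j ^ (m + n) = a j ^ m * a j ^ n :=
      fun j m n => pow_add _ _ _
    have hFadd : ∀ μ ν : ℕ →₀ ℕ, F (μ + ν) = F μ * F ν := by
      intro μ ν
      simp only [hF]
      rw [Finsupp.prod_add_index' hzero hadd]
    have hFsingle : ∀ (j : ℕ) (m : ℕ), F (Finsupp.single j m) = a j ^ m := by
      intro j m
      simp only [hF]
      exact Finsupp.prod_single_index (hzero j)
    let E : {ν : ℕ →₀ ℕ // (ν.support : Set ℕ) ⊆ ((insert k s : Finset ℕ) : Set ℕ)} ≃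
        {ν : ℕ →₀ ℕ // (ν.support : Set ℕ) ⊆ (s : Set ℕ)} × ℕ :=
      { toFun := fun ν => (⟨ν.1.erase k, by
          intro x hx
          simp only [Finset.coe_subset, Finsupp.support_erase, Finset.coe_erase,
            Set.mem_diff] at hx ⊢
          rcases hx with ⟨hx1, hx2⟩
          have := ν.2 hx1
          simp only [Finset.coe_insert, Set.mem_insert_iff] at this
          rcases this with h | h
          · exact absurd h hx2
          · exact h⟩, ν.1 k)
        invFun := fun p => ⟨p.1.1 + Finsupp.single k p.2, by
          intro x hx
          have := Finsupp.support_add hx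
          simp only [Finset.mem_union] at this
          rcases this with h | h
          · exact Set.mem_of_mem_of_subset (by exact_mod_cast h) (p.1.2.trans (by
              simp only [Finset.coe_insert]
              exact Set.subset_insert _ _))
          · have := Finsupp.support_single_subset h
            simp only [Finset.mem_singleton] at this
            subst this
            simp⟩
        left_inv := fun ν => Subtype.ext (Finsupp.erase_add_single k ν.1)
        right_inv := fun p => by
          have hpk : p.1.1 k = 0 := by
            by_contra h
            have : k ∈ p.1.1.support := Finsupp.mem_support_iff.mpr h
            have := p.1.2 (by exact_mod_cast this)
            simp only [Finset.mem_coe] at this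
            exact hk (by exact_mod_cast this)
          ext x
          · simp only [Finsupp.erase_add, Finsupp.erase_single,
              add_zero]
            rw [Finsupp.erase_of_notMem_support (by simp [Finsupp.mem_support_iff, hpk]
              )]
          · simp [hpk] }
    have hgeom : HasSum (fun n : ℕ => a k ^ n) (1 - a k)⁻¹ :=
      hasSum_geometric_of_lt_one (h0 k) (h1 k)
    have hprod : HasSum (fun p : {ν : ℕ →₀ ℕ // (ν.support : Set ℕ) ⊆ (s : Set ℕ)} × ℕ =>
        F p.1.1 * a k ^ p.2) ((∏ j ∈ s, (1 - a j)⁻¹) * (1 - a k)⁻¹) := by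
      apply ih.mul hgeom
      apply ih.summable.mul_of_nonneg hgeom.summable
      · intro ν
        exact Finset.prod_nonneg fun j _ => pow_nonneg (h0 j) _
      · intro n
        exact pow_nonneg (h0 k) _
    rw [Finset.prod_insert hk, mul_comm]
    show HasSum (fun ν : {ν : ℕ →₀ ℕ // (ν.support : Set ℕ) ⊆ ((insert k s : Finset ℕ) : Set ℕ)} => F ν.1) _
    rw [← Equiv.hasSum_iff E.symm]
    convert hprod using 1
    funext p
    simp only [Function.comp_apply, E, Equiv.coe_fn_symm_mk]
    rw [hFadd, hFsingle]

lemma aux_main (a : ℕ → ℝ) (h0 : ∀ j, 0 < a j) (h1 : ∀ j, a j < 1) (hsa : Summable a) :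
    Summable (fun ν : ℕ →₀ ℕ => ν.prod fun j n => a j ^ n) ∧
      HasProd (fun j => (1 - a j)⁻¹)
        (∑' ν : ℕ →₀ ℕ, ν.prod fun j n => a j ^ n) := by
  classical
  set F : (ℕ →₀ ℕ) → ℝ := fun ν => ν.prod fun j n => a j ^ n with hF
  have hFnonneg : ∀ ν, 0 ≤ F ν := fun ν =>
    Finset.prod_nonneg fun j _ => pow_nonneg (h0 j).le _
  set b : ℕ → ℝ := fun j => a j / (1 - a j) with hb
  have hb0 : ∀ j, 0 ≤ b j := fun j =>
    div_nonneg (h0 j).le (by linarith [h1 j])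
  have hbs : Summable b := by
    have ha0 : Filter.Tendsto a Filter.atTop (nhds 0) := hsa.tendsto_atTop_zero
    obtain ⟨N, hN⟩ :=
      Filter.eventually_atTop.mp (ha0.eventually (gt_mem_nhds (by norm_num : (0:ℝ) < 1/2)))
    have hbound : ∀ j, b j ≤ 2 * a j + (if j < N then b j else 0) := by
      intro j
      by_cases hj : j < N
      · simp only [if_pos hj]
        have : 0 ≤ 2 * a j := by linarith [(h0 j).le]
        linarith
      · simp only [if_neg hj, add_zero]
        have hjN : N ≤ j := le_of_not_gt hj
        have haj : a j < 1/2 := hN j hjN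
        have h2 : (1:ℝ)/2 ≤ 1 - a j := by linarith
        rw [hb, div_le_iff₀ (by linarith [h1 j] : (0:ℝ) < 1 - a j)]
        nlinarith [(h0 j).le]
    have hsum2 : Summable (fun j => 2 * a j + (if j < N then b j else 0)) := by
      apply ((hsa.mul_left 2).add ?_)
      apply summable_of_ne_finset_zero (s := Finset.range N)
      intro j hj
      simp only [Finset.mem_range] at hj
      simp [hj]
    exact Summable.of_nonneg_of_le hb0 hbound hsum2
  have hinv_eq : ∀ j, (1 - a j)⁻¹ = 1 + b j := by
    intro j
    have h : (0:ℝ) < 1 - a j := by linarith [h1 j]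
    simp only [hb]
    field_simp
    ring
  have hP_le : ∀ s : Finset ℕ, (∏ j ∈ s, (1 - a j)⁻¹) ≤ Real.exp (∑' j, b j) := by
    intro s
    calc (∏ j ∈ s, (1 - a j)⁻¹) ≤ ∏ j ∈ s, Real.exp (b j) := by
          apply Finset.prod_le_prod
          · intro j _
            exact inv_nonneg.mpr (by linarith [h1 j])
          · intro j _
            rw [hinv_eq j]
            linarith [Real.add_one_le_exp (b j)]
      _ = Real.exp (∑ j ∈ s, b j) := by rw [Real.exp_sum]
      _ ≤ Real.exp (∑' j, b j) := by
          apply Real.exp_le_exp.mpr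
          exact Summable.sum_le_tsum s (fun j _ => hb0 j) hbs
  have hsum_u : ∀ u : Finset (ℕ →₀ ℕ), ∃ s : Finset ℕ,
      ∑ ν ∈ u, F ν ≤ ∏ j ∈ s, (1 - a j)⁻¹ := by
    intro u
    refine ⟨u.sup Finsupp.support, ?_⟩
    have hA := aux_hasSum_indicator a (fun j => (h0 j).le) h1 (u.sup Finsupp.support)
    have heq : ∀ ν ∈ u, F ν = Set.indicator
        {ν : ℕ →₀ ℕ | (ν.support : Set ℕ) ⊆ ((u.sup Finsupp.support : Finset ℕ) : Set ℕ)} F ν := by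
      intro ν hν
      rw [Set.indicator_of_mem]
      intro x hx
      exact_mod_cast (Finset.le_sup hν : ν.support ⊆ u.sup Finsupp.support) (by exact_mod_cast hx)
    rw [Finset.sum_congr rfl heq]
    exact sum_le_hasSum u (fun ν _ => Set.indicator_nonneg (fun ν _ => hFnonneg ν) ν) hA
  have hFsummable : Summable F := by
    apply summable_of_sum_le hFnonneg
    intro u
    obtain ⟨s, hs⟩ := hsum_u u
    exact hs.trans (hP_le s)
  refine ⟨hFsummable, ?_⟩
  have hmono : Monotone (fun s : Finset ℕ => ∏ j ∈ s, (1 - a j)⁻¹) := by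
    intro s t hst
    simp only
    rw [← Finset.prod_sdiff hst]
    have h1' : (1:ℝ) ≤ ∏ j ∈ t \ s, (1 - a j)⁻¹ := by
      calc (1:ℝ) = ∏ _j ∈ t \ s, (1:ℝ) := by simp
        _ ≤ ∏ j ∈ t \ s, (1 - a j)⁻¹ := by
            apply Finset.prod_le_prod (by intros; norm_num)
            intro j _
            rw [hinv_eq j]
            linarith [hb0 j]
    have h2' : (0:ℝ) ≤ ∏ j ∈ s, (1 - a j)⁻¹ :=
      Finset.prod_nonneg fun j _ => inv_nonneg.mpr (by linarith [h1 j])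
    exact le_mul_of_one_le_left h2' h1'
  have hlub : IsLUB (Set.range fun s : Finset ℕ => ∏ j ∈ s, (1 - a j)⁻¹) (∑' ν, F ν) := by
    constructor
    · rintro x ⟨s, rfl⟩
      have hA := aux_hasSum_indicator a (fun j => (h0 j).le) h1 s
      apply hasSum_le ?_ hA hFsummable.hasSum
      intro ν
      exact Set.indicator_le_self' (fun ν _ => hFnonneg ν) ν
    · intro c hc
      apply Summable.tsum_le_of_sum_le hFsummable
      intro u
      obtain ⟨s, hs⟩ := hsum_u u
      exact hs.trans (hc ⟨s, rfl⟩)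
  exact tendsto_atTop_isLUB hmono hlub

theorem stmt_2 (ρ : ℕ → ℝ) (q : ℝ) (hq : 0 < q) (hρ : ∀ j, 1 < ρ j)
    (hsum : Summable fun j => (ρ j) ^ (-q)) :
    Summable (fun ν : ℕ →₀ ℕ => (ν.prod fun j n => ρ j ^ n) ^ (-q)) ∧
      ∑' ν : ℕ →₀ ℕ, (ν.prod fun j n => ρ j ^ n) ^ (-q) =
        ∏' j : ℕ, (1 - (ρ j) ^ (-q))⁻¹ := by
  set a : ℕ → ℝ := fun j => ρ j ^ (-q) with ha
  have h0 : ∀ j, 0 < a j := fun j => Real.rpow_pos_of_pos (by linarith [hρ j]) _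
  have h1 : ∀ j, a j < 1 := fun j =>
    Real.rpow_lt_one_of_one_lt_of_neg (hρ j) (by linarith)
  have key : ∀ ν : ℕ →₀ ℕ,
      (ν.prod fun j n => ρ j ^ n) ^ (-q) = ν.prod fun j n => a j ^ n := by
    intro ν
    rw [Finsupp.prod, Finsupp.prod,
      ← Real.finset_prod_rpow _ _ (fun j _ => pow_nonneg (by linarith [hρ j]) _) (-q)]
    · refine Finset.prod_congr rfl fun j _ => ?_
      have hρ0 : (0:ℝ) ≤ ρ j := by linarith [hρ j]
      rw [← Real.rpow_natCast (ρ j) (ν j), ← Real.rpow_natCast (a j) (ν j), ha,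
        ← Real.rpow_mul hρ0, ← Real.rpow_mul hρ0, mul_comm]
  obtain ⟨hsummable, hprod⟩ := aux_main a h0 h1 hsum
  constructor
  · exact (summable_congr key).mpr hsummable
  · rw [tsum_congr key, hprod.tprod_eq]
end

section
/- Let F be the set of finitely supported multi-indices over ℕ and let (t_ν)_{ν∈F} be nonnegative reals. Suppose ρ = (ρ_j)_{j≥1} satisfies ρ_j > 1 and (ρ_j^{-1}) ∈ ℓ^q(ℕ) with q = 2p/(2-p) for some 0 < p < 2, and suppose ∑_{ν∈F} ρ^{2ν} t_ν^2 < ∞. Then ∑_{ν∈F} t_ν^p < ∞. -/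
open Finset

/-- Finite partial sums of products of geometric terms over finsupps are bounded by the
product of the geometric series. -/
lemma finsupp_sum_le_prod (r : ℕ → ℝ) (h0 : ∀ j, 0 ≤ r j) (h1 : ∀ j, r j < 1) :
    ∀ (N : ℕ) (S : Finset (ℕ →₀ ℕ)), (∀ ν ∈ S, ν.support ⊆ Finset.range N) →
      ∑ ν ∈ S, ∏ j ∈ Finset.range N, r j ^ ν j ≤ ∏ j ∈ Finset.range N, (1 - r j)⁻¹ := by
  intro N
  induction N with
  | zero =>
    intro S hS
    simp only [Finset.range_zero, Finset.prod_empty]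
    have hsub : S ⊆ {0} := by
      intro ν hν
      simp only [Finset.mem_singleton]
      ext j
      by_contra h
      have : j ∈ ν.support := Finsupp.mem_support_iff.mpr (by simpa using h)
      exact absurd (hS ν hν this) (by simp)
    calc ∑ _ν ∈ S, (1 : ℝ) ≤ ∑ _ν ∈ ({0} : Finset (ℕ →₀ ℕ)), (1 : ℝ) :=
          Finset.sum_le_sum_of_subset_of_nonneg hsub (fun _ _ _ => zero_le_one)
      _ = 1 := by simp
  | succ N ih =>
    intro S hS
    set φ : (ℕ →₀ ℕ) → ℕ × (ℕ →₀ ℕ) := fun ν => (ν N, ν.erase N) with hφ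
    have hφinj : Function.Injective φ := by
      intro ν μ h
      have h1' : ν N = μ N := congrArg Prod.fst h
      have h2' : ν.erase N = μ.erase N := congrArg Prod.snd h
      ext j
      rcases eq_or_ne j N with rfl | hj
      · exact h1'
      · have := congrArg (fun f : ℕ →₀ ℕ => f j) h2'
        simpa [Finsupp.erase_ne hj] using this
    have key : ∀ ν : ℕ →₀ ℕ, ∏ j ∈ Finset.range (N + 1), r j ^ ν j
        = r N ^ ν N * ∏ j ∈ Finset.range N, r j ^ (ν.erase N) j := by
      intro ν
      rw [Finset.prod_range_succ, mul_comm]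
      congr 1
      apply Finset.prod_congr rfl
      intro j hj
      have hj' : j ≠ N := by
        intro h; subst h; simp at hj
      rw [Finsupp.erase_ne hj']
    set K : Finset ℕ := S.image (fun ν => ν N) with hK
    set M : Finset (ℕ →₀ ℕ) := S.image (Finsupp.erase N) with hM
    have step1 : ∑ ν ∈ S, ∏ j ∈ Finset.range (N + 1), r j ^ ν j
        = ∑ x ∈ S.image φ, r N ^ x.1 * ∏ j ∈ Finset.range N, r j ^ x.2 j := by
      rw [Finset.sum_image (fun a _ b _ h => hφinj h)]
      exact Finset.sum_congr rfl fun ν _ => key ν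
    have hsub : S.image φ ⊆ K ×ˢ M := by
      intro x hx
      rw [Finset.mem_image] at hx
      obtain ⟨ν, hν, rfl⟩ := hx
      exact Finset.mem_product.mpr ⟨Finset.mem_image_of_mem _ hν, Finset.mem_image_of_mem _ hν⟩
    have hnonneg : ∀ x : ℕ × (ℕ →₀ ℕ),
        0 ≤ r N ^ x.1 * ∏ j ∈ Finset.range N, r j ^ x.2 j := by
      intro x
      exact mul_nonneg (pow_nonneg (h0 N) _)
        (Finset.prod_nonneg fun j _ => pow_nonneg (h0 j) _)
    have step2 : ∑ x ∈ S.image φ, r N ^ x.1 * ∏ j ∈ Finset.range N, r j ^ x.2 j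
        ≤ ∑ x ∈ K ×ˢ M, r N ^ x.1 * ∏ j ∈ Finset.range N, r j ^ x.2 j :=
      Finset.sum_le_sum_of_subset_of_nonneg hsub (fun x _ _ => hnonneg x)
    have step3 : ∑ x ∈ K ×ˢ M, r N ^ x.1 * ∏ j ∈ Finset.range N, r j ^ x.2 j
        = (∑ k ∈ K, r N ^ k) * (∑ μ ∈ M, ∏ j ∈ Finset.range N, r j ^ μ j) := by
      rw [Finset.sum_mul_sum, Finset.sum_product]
    have hgeom : ∑ k ∈ K, r N ^ k ≤ (1 - r N)⁻¹ := by
      have hs : Summable (fun k : ℕ => r N ^ k) :=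
        summable_geometric_of_lt_one (h0 N) (h1 N)
      calc ∑ k ∈ K, r N ^ k ≤ ∑' k : ℕ, r N ^ k :=
            Summable.sum_le_tsum K (fun k _ => pow_nonneg (h0 N) k) hs
        _ = (1 - r N)⁻¹ := tsum_geometric_of_lt_one (h0 N) (h1 N)
    have hMsub : ∀ μ ∈ M, μ.support ⊆ Finset.range N := by
      intro μ hμ
      rw [hM, Finset.mem_image] at hμ
      obtain ⟨ν, hν, rfl⟩ := hμ
      intro j hj
      have hjN : j ≠ N := by
        intro h; subst h; simp [Finsupp.mem_support_iff] at hj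
      have : j ∈ ν.support := by
        rw [Finsupp.mem_support_iff] at hj ⊢
        rwa [Finsupp.erase_ne hjN] at hj
      have := hS ν hν this
      rw [Finset.mem_range] at this ⊢
      omega
    have hIH := ih M hMsub
    have hsum_nonneg : 0 ≤ ∑ μ ∈ M, ∏ j ∈ Finset.range N, r j ^ μ j :=
      Finset.sum_nonneg fun μ _ => Finset.prod_nonneg fun j _ => pow_nonneg (h0 j) _
    calc ∑ ν ∈ S, ∏ j ∈ Finset.range (N + 1), r j ^ ν j
        ≤ (∑ k ∈ K, r N ^ k) * (∑ μ ∈ M, ∏ j ∈ Finset.range N, r j ^ μ j) := by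
          rw [step1, ← step3]; exact step2
      _ ≤ (1 - r N)⁻¹ * ∏ j ∈ Finset.range N, (1 - r j)⁻¹ := by
          apply mul_le_mul hgeom hIH hsum_nonneg
          exact inv_nonneg.mpr (by linarith [h1 N])
      _ = ∏ j ∈ Finset.range (N + 1), (1 - r j)⁻¹ := by
          rw [Finset.prod_range_succ, mul_comm]

/-- The partial products `∏_{j<N} (1-r j)⁻¹` are uniformly bounded when `r` is summable. -/
lemma prod_inv_one_sub_bound (r : ℕ → ℝ) (h0 : ∀ j, 0 ≤ r j) (h1 : ∀ j, r j < 1)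
    (hs : Summable r) :
    ∃ C : ℝ, ∀ N : ℕ, ∏ j ∈ Finset.range N, (1 - r j)⁻¹ ≤ C := by
  -- choose j0 with r j ≤ 1/2 for j ≥ j0
  have htend : Filter.Tendsto r Filter.atTop (nhds 0) := hs.tendsto_atTop_zero
  obtain ⟨j0, hj0⟩ : ∃ j0, ∀ j ≥ j0, r j ≤ 1 / 2 := by
    have := htend.eventually (eventually_le_nhds (by norm_num : (0:ℝ) < 1/2))
    rw [Filter.eventually_atTop] at this
    exact this
  set C0 : ℝ := ∏ j ∈ Finset.range j0, (1 - r j)⁻¹ with hC0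
  refine ⟨C0 * Real.exp (2 * ∑' j, r j), fun N => ?_⟩
  have hterm1 : ∀ j, (1 : ℝ) ≤ (1 - r j)⁻¹ := by
    intro j
    rw [le_inv_comm₀ one_pos (by linarith [h1 j])]
    linarith [h0 j]
  -- monotone in N, so WLOG N ≥ j0
  have honele : ∀ s : Finset ℕ, (1:ℝ) ≤ ∏ j ∈ s, (1 - r j)⁻¹ := by
    intro s
    calc (1:ℝ) = ∏ j ∈ s, 1 := by simp
      _ ≤ ∏ j ∈ s, (1 - r j)⁻¹ :=
        Finset.prod_le_prod (fun _ _ => zero_le_one) (fun j _ => hterm1 j)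
  have hmono : ∏ j ∈ Finset.range N, (1 - r j)⁻¹ ≤ ∏ j ∈ Finset.range (max N j0), (1 - r j)⁻¹ := by
    rw [← Finset.prod_range_mul_prod_Ico _ (le_max_left N j0)]
    exact le_mul_of_one_le_right
      (Finset.prod_nonneg fun j _ => inv_nonneg.mpr (by linarith [h1 j])) (honele _)
  refine hmono.trans ?_
  set M := max N j0
  have hM : j0 ≤ M := le_max_right _ _
  rw [← Finset.prod_range_mul_prod_Ico _ hM]
  have hbound : ∏ j ∈ Finset.Ico j0 M, (1 - r j)⁻¹ ≤ Real.exp (2 * ∑' j, r j) := by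
    have hstep : ∏ j ∈ Finset.Ico j0 M, (1 - r j)⁻¹
        ≤ ∏ j ∈ Finset.Ico j0 M, Real.exp (2 * r j) := by
      apply Finset.prod_le_prod
      · intro j _
        exact inv_nonneg.mpr (by linarith [h1 j])
      · intro j hj
        rw [Finset.mem_Ico] at hj
        have hr2 : r j ≤ 1 / 2 := hj0 j hj.1
        rw [inv_le_iff_one_le_mul₀' (by linarith [h1 j])]
        have hexp : 2 * r j + 1 ≤ Real.exp (2 * r j) := Real.add_one_le_exp _
        have : (1 - r j) * (2 * r j + 1) = 1 + r j * (1 - 2 * r j) := by ring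
        nlinarith [h0 j, h1 j]
    refine hstep.trans ?_
    rw [← Real.exp_sum]
    apply Real.exp_le_exp.mpr
    rw [← Finset.mul_sum]
    have : ∑ j ∈ Finset.Ico j0 M, r j ≤ ∑' j, r j := by
      exact Summable.sum_le_tsum _ (fun j _ => h0 j) hs
    linarith
  have hC0pos : 0 ≤ C0 := Finset.prod_nonneg fun j _ => inv_nonneg.mpr (by linarith [h1 j])
  exact mul_le_mul_of_nonneg_left hbound hC0pos

/-- Summability of the product of geometric terms over finsupps. -/
lemma summable_finsupp_prod (r : ℕ → ℝ) (h0 : ∀ j, 0 ≤ r j) (h1 : ∀ j, r j < 1)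
    (hs : Summable r) :
    Summable fun ν : ℕ →₀ ℕ => ν.prod fun j n => r j ^ n := by
  obtain ⟨C, hC⟩ := prod_inv_one_sub_bound r h0 h1 hs
  apply summable_of_sum_le (c := C)
  · intro ν
    exact Finset.prod_nonneg fun j _ => pow_nonneg (h0 j) _
  · intro S
    set N : ℕ := S.sup fun ν => (ν.support.sup id) + 1 with hN
    have hsupp : ∀ ν ∈ S, ν.support ⊆ Finset.range N := by
      intro ν hν j hj
      rw [Finset.mem_range]
      have h1' : j ≤ ν.support.sup id := Finset.le_sup (f := id) hj
      have h2' : (ν.support.sup id) + 1 ≤ N := Finset.le_sup (f := fun ν => (ν.support.sup id) + 1) hν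
      omega
    have heq : ∀ ν ∈ S, (ν.prod fun j n => r j ^ n) = ∏ j ∈ Finset.range N, r j ^ ν j := by
      intro ν hν
      exact Finsupp.prod_of_support_subset ν (hsupp ν hν) _ (fun j _ => pow_zero _)
    calc ∑ ν ∈ S, (ν.prod fun j n => r j ^ n) = ∑ ν ∈ S, ∏ j ∈ Finset.range N, r j ^ ν j :=
          Finset.sum_congr rfl heq
      _ ≤ ∏ j ∈ Finset.range N, (1 - r j)⁻¹ := finsupp_sum_le_prod r h0 h1 N S hsupp
      _ ≤ C := hC N

set_option maxHeartbeats 1000000 in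
theorem stmt_3 (t : (ℕ →₀ ℕ) → ℝ) (ρ : ℕ → ℝ) (p : ℝ) (hp0 : 0 < p) (hp2 : p < 2)
    (ht : ∀ ν, 0 ≤ t ν) (hρ : ∀ j, 1 < ρ j)
    (hℓq : Summable fun j => (ρ j) ^ (-(2 * p / (2 - p))))
    (hweighted : Summable fun ν : ℕ →₀ ℕ => (ν.prod fun j n => ρ j ^ n) ^ 2 * (t ν) ^ 2) :
    Summable fun ν : ℕ →₀ ℕ => (t ν) ^ p := by
  set q : ℝ := 2 * p / (2 - p) with hq
  have h2p : (0:ℝ) < 2 - p := by linarith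
  have hqpos : 0 < q := div_pos (by linarith) h2p
  set r : ℕ → ℝ := fun j => ρ j ^ (-q) with hr
  have hr0 : ∀ j, 0 ≤ r j := fun j =>
    (Real.rpow_pos_of_pos (lt_trans one_pos (hρ j)) _).le
  have hr1 : ∀ j, r j < 1 := fun j =>
    Real.rpow_lt_one_of_one_lt_of_neg (hρ j) (by linarith)
  have hrs : Summable r := hℓq
  -- Summability of B ν = ν.prod (fun j n => r j ^ n)
  have hB : Summable fun ν : ℕ →₀ ℕ => ν.prod fun j n => r j ^ n :=
    summable_finsupp_prod r hr0 hr1 hrs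
  -- positivity of the weight P ν
  have hPpos : ∀ ν : ℕ →₀ ℕ, 0 < ν.prod fun j n => ρ j ^ n := by
    intro ν
    exact Finset.prod_pos fun j _ => pow_pos (lt_trans one_pos (hρ j)) _
  -- identify B ν with (P ν) ^ (-q)
  have hBP : ∀ ν : ℕ →₀ ℕ, (ν.prod fun j n => ρ j ^ n) ^ (-q) = ν.prod fun j n => r j ^ n := by
    intro ν
    rw [Finsupp.prod, Finsupp.prod, ← Real.finset_prod_rpow _ _
      (fun j _ => (pow_pos (lt_trans one_pos (hρ j)) _).le)]
    apply Finset.prod_congr rfl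
    intro j _
    rw [← Real.rpow_natCast (ρ j) (ν j), ← Real.rpow_natCast (r j) (ν j), hr,
      ← Real.rpow_mul (lt_trans one_pos (hρ j)).le, ← Real.rpow_mul (lt_trans one_pos (hρ j)).le,
      mul_comm]
  -- conjugate exponents 2/p and 2/(2-p)
  have hconj : (2 / p).HolderConjugate (2 / (2 - p)) := by
    rw [Real.holderConjugate_iff]; constructor
    · rw [lt_div_iff₀ hp0]; linarith
    · rw [inv_div, inv_div]; ring
  -- Young: t ν ^ p ≤ (p/2) * (P ν * t ν)^2 + ((2-p)/2) * B ν
  refine Summable.of_nonneg_of_le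
    (f := fun ν => p / 2 * ((ν.prod fun j n => ρ j ^ n) ^ 2 * (t ν) ^ 2)
      + (2 - p) / 2 * (ν.prod fun j n => r j ^ n))
    (fun ν => Real.rpow_nonneg (ht ν) p) (fun ν => ?_) ?_
  · 
    set P : ℝ := ν.prod fun j n => ρ j ^ n with hP
    have hP0 : 0 < P := hPpos ν
    have ha : (0:ℝ) ≤ (P * t ν) ^ p := Real.rpow_nonneg (mul_nonneg hP0.le (ht ν)) p
    have hb : (0:ℝ) ≤ P ^ (-(p : ℝ)) := (Real.rpow_pos_of_pos hP0 _).le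
    have hyoung := Real.young_inequality_of_nonneg ha hb hconj
    -- LHS of young equals t ν ^ p
    have hlhs : (P * t ν) ^ p * P ^ (-(p:ℝ)) = t ν ^ p := by
      rw [Real.mul_rpow hP0.le (ht ν), mul_comm (P ^ p), mul_assoc,
        ← Real.rpow_add hP0, add_neg_cancel, Real.rpow_zero, mul_one]
    -- powers
    have h1' : ((P * t ν) ^ p) ^ (2 / p) = (P * t ν) ^ (2:ℕ) := by
      rw [← Real.rpow_natCast (P * t ν) 2, ← Real.rpow_mul (mul_nonneg hP0.le (ht ν))]
      congr 1
      field_simp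
      norm_num
    have h2' : (P ^ (-(p:ℝ))) ^ (2 / (2 - p)) = P ^ (-q) := by
      rw [← Real.rpow_mul hP0.le]
      congr 1
      rw [hq]
      field_simp
    rw [hlhs, h1', h2'] at hyoung
    rw [mul_pow, hBP ν] at hyoung
    calc t ν ^ p ≤ P ^ 2 * t ν ^ 2 / (2 / p) + (ν.prod fun j n => r j ^ n) / (2 / (2 - p)) :=
          hyoung
      _ = p / 2 * (P ^ 2 * t ν ^ 2) + (2 - p) / 2 * (ν.prod fun j n => r j ^ n) := by
          rw [div_div_eq_mul_div, div_div_eq_mul_div]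
          ring
  · exact ((hweighted.mul_left (p / 2)).add (hB.mul_left ((2 - p) / 2)))
end

section
/- Let ρ = (ρ_j)_{j≥1} with ρ_j > 1 for all j and ∑_j ρ_j^{-q} < ∞ for some 0 < q < ∞, and suppose sup_j ρ_j^{-1} < 1. Then for each j, the series S_j := ∑_{k≥0} ρ_j^{-qk}(1+2k)^{q/2} converges, and there exists a constant C > 0 such that S_j ≤ 1 + C ρ_j^{-q} for all j; consequently ∏_{j≥1} S_j converges (is finite). -/
open Real

/-- Geometric-times-polynomial summability with a real exponent. -/
lemma aux_summable_geom_rpow (r p : ℝ) (hp : 0 ≤ p) (hr0 : 0 < r) (hr1 : r < 1) :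
    Summable fun k : ℕ => r ^ k * (1 + 2 * (k : ℝ)) ^ p := by
  set N := ⌈p⌉₊ with hN
  have hnorm : ‖r‖ < 1 := by rw [Real.norm_eq_abs, abs_of_pos hr0]; exact hr1
  have h1 : Summable fun n : ℕ => (n : ℝ) ^ N * r ^ n :=
    summable_pow_mul_geometric_of_norm_lt_one N hnorm
  have h2 : Summable fun k : ℕ => ((k + 1 : ℕ) : ℝ) ^ N * r ^ (k + 1) :=
    h1.comp_injective Nat.succ_injective
  have h3 : Summable fun k : ℕ => ((k : ℝ) + 1) ^ N * r ^ k := by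
    refine (h2.mul_left r⁻¹).congr fun k => ?_
    push_cast
    field_simp
    ring
  refine Summable.of_nonneg_of_le (fun k => ?_) (fun k => ?_) (h3.mul_left ((3:ℝ) ^ p))
  · have h1k : (0:ℝ) < 1 + 2 * k := by positivity
    positivity
  · have hkp : (1:ℝ) ≤ (k:ℝ) + 1 := by have := Nat.cast_nonneg (α := ℝ) k; linarith
    have h1k : (0:ℝ) ≤ 1 + 2 * k := by positivity
    have hb : (1 + 2 * (k:ℝ)) ≤ 3 * ((k:ℝ) + 1) := by nlinarith [Nat.cast_nonneg (α := ℝ) k]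
    have hstep1 : (1 + 2 * (k:ℝ)) ^ p ≤ (3 * ((k:ℝ) + 1)) ^ p :=
      Real.rpow_le_rpow h1k hb hp
    have hstep2 : (3 * ((k:ℝ) + 1)) ^ p = 3 ^ p * ((k:ℝ) + 1) ^ p :=
      Real.mul_rpow (by norm_num) (by positivity)
    have hstep3 : ((k:ℝ) + 1) ^ p ≤ ((k:ℝ) + 1) ^ N := by
      rw [← Real.rpow_natCast ((k:ℝ) + 1) N]
      exact Real.rpow_le_rpow_of_exponent_le hkp (Nat.le_ceil p)
    have h3p : (0:ℝ) ≤ (3:ℝ) ^ p := by positivity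
    have hrk : (0:ℝ) ≤ r ^ k := by positivity
    calc r ^ k * (1 + 2 * (k:ℝ)) ^ p
        ≤ r ^ k * (3 ^ p * ((k:ℝ) + 1) ^ N) := by
          refine mul_le_mul_of_nonneg_left ?_ hrk
          calc (1 + 2 * (k:ℝ)) ^ p ≤ 3 ^ p * ((k:ℝ) + 1) ^ p := by rw [← hstep2]; exact hstep1
            _ ≤ 3 ^ p * ((k:ℝ) + 1) ^ N := mul_le_mul_of_nonneg_left hstep3 h3p
      _ = 3 ^ p * (((k:ℝ) + 1) ^ N * r ^ k) := by ring

theorem stmt_5 (ρ : ℕ → ℝ) (q : ℝ) (hq : 0 < q) (hρ : ∀ j, 1 < ρ j)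
    (hsum : Summable fun j => (ρ j) ^ (-q))
    (hsup : ∃ c < 1, ∀ j, (ρ j)⁻¹ ≤ c) :
    (∀ j, Summable fun k : ℕ => (ρ j) ^ (-(q * k)) * (1 + 2 * (k : ℝ)) ^ (q / 2)) ∧
    (∃ C > 0, ∀ j,
      (∑' k : ℕ, (ρ j) ^ (-(q * k)) * (1 + 2 * (k : ℝ)) ^ (q / 2)) ≤ 1 + C * (ρ j) ^ (-q)) ∧
    Multipliable fun j => ∑' k : ℕ, (ρ j) ^ (-(q * k)) * (1 + 2 * (k : ℝ)) ^ (q / 2) := by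
  obtain ⟨c, hc1, hc⟩ := hsup
  have hρpos : ∀ j, (0:ℝ) < ρ j := fun j => lt_trans one_pos (hρ j)
  have hc0 : 0 < c := lt_of_lt_of_le (inv_pos.mpr (hρpos 0)) (hc 0)
  -- r j := ρ j ^ (-q)
  have hr0 : ∀ j, 0 < (ρ j) ^ (-q) := fun j => Real.rpow_pos_of_pos (hρpos j) _
  have hr1 : ∀ j, (ρ j) ^ (-q) < 1 := fun j =>
    Real.rpow_lt_one_of_one_lt_of_neg (hρ j) (neg_neg_iff_pos.mpr hq)
  -- rewrite terms as powers of r j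
  have hterm : ∀ j (k : ℕ), (ρ j) ^ (-(q * (k:ℝ))) = ((ρ j) ^ (-q)) ^ k := by
    intro j k
    rw [← Real.rpow_natCast ((ρ j) ^ (-q)) k, ← Real.rpow_mul (hρpos j).le]
    ring_nf
  have hq2 : (0:ℝ) ≤ q / 2 := by positivity
  -- Part 1: summability
  have hS : ∀ j, Summable fun k : ℕ => (ρ j) ^ (-(q * (k:ℝ))) * (1 + 2 * (k : ℝ)) ^ (q / 2) := by
    intro j
    refine (aux_summable_geom_rpow _ _ hq2 (hr0 j) (hr1 j)).congr fun k => ?_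
    rw [hterm j k]
  -- The constant C
  have hcq0 : 0 < c ^ q := Real.rpow_pos_of_pos hc0 _
  have hcq1 : c ^ q < 1 := Real.rpow_lt_one hc0.le hc1 hq
  have hCsum : Summable fun k : ℕ => (c ^ q) ^ k * (1 + 2 * ((k:ℝ) + 1)) ^ (q / 2) := by
    have base := aux_summable_geom_rpow (c ^ q) (q / 2) hq2 hcq0 hcq1
    have := base.comp_injective Nat.succ_injective
    refine (this.mul_left ((c ^ q)⁻¹)).congr fun k => ?_
    simp only [Function.comp_apply, Nat.succ_eq_add_one]
    push_cast
    field_simp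
    ring
  set C := ∑' k : ℕ, (c ^ q) ^ k * (1 + 2 * ((k:ℝ) + 1)) ^ (q / 2) with hCdef
  have hCterm_nonneg : ∀ k : ℕ, 0 ≤ (c ^ q) ^ k * (1 + 2 * ((k:ℝ) + 1)) ^ (q / 2) := by
    intro k
    have : (0:ℝ) < 1 + 2 * ((k:ℝ) + 1) := by positivity
    positivity
  have hCpos : 0 < C := by
    refine Summable.tsum_pos hCsum hCterm_nonneg 0 ?_
    have : (0:ℝ) < 1 + 2 * ((0:ℝ) + 1) := by norm_num
    positivity
  -- key bound ρ j ^ (-q) ≤ c ^ q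
  have hrc : ∀ j, (ρ j) ^ (-q) ≤ c ^ q := by
    intro j
    rw [Real.rpow_neg (hρpos j).le, ← Real.inv_rpow (hρpos j).le]
    exact Real.rpow_le_rpow (inv_pos.mpr (hρpos j)).le (hc j) hq.le
  -- Part 2: the bound
  have hbound : ∀ j,
      (∑' k : ℕ, (ρ j) ^ (-(q * (k:ℝ))) * (1 + 2 * (k : ℝ)) ^ (q / 2)) ≤ 1 + C * (ρ j) ^ (-q) := by
    intro j
    rw [Summable.tsum_eq_zero_add (hS j)]
    have h0 : (ρ j) ^ (-(q * ((0:ℕ):ℝ))) * (1 + 2 * ((0:ℕ) : ℝ)) ^ (q / 2) = 1 := by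
      norm_num
    rw [h0]
    gcongr 1 + ?_
    -- tail ≤ ρ j ^(-q) * C = C * ρ j ^ (-q)
    have htail : (∑' k : ℕ, (ρ j) ^ (-(q * ((k+1:ℕ):ℝ))) * (1 + 2 * ((k+1:ℕ) : ℝ)) ^ (q / 2))
        ≤ (ρ j) ^ (-q) * C := by
      have hsum2 : Summable fun k : ℕ =>
          (ρ j) ^ (-(q * ((k+1:ℕ):ℝ))) * (1 + 2 * ((k+1:ℕ) : ℝ)) ^ (q / 2) :=
        (hS j).comp_injective Nat.succ_injective
      rw [hCdef, ← tsum_mul_left]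
      refine Summable.tsum_le_tsum (fun k => ?_) hsum2 (hCsum.mul_left _)
      rw [hterm j (k+1)]
      push_cast
      have hpow : ((ρ j) ^ (-q)) ^ (k + 1) ≤ (ρ j) ^ (-q) * (c ^ q) ^ k := by
        rw [pow_succ, mul_comm]
        exact mul_le_mul_of_nonneg_left (pow_le_pow_left₀ (hr0 j).le (hrc j) k) (hr0 j).le
      have hnn : (0:ℝ) ≤ (1 + 2 * ((k:ℝ) + 1)) ^ (q / 2) := by
        have : (0:ℝ) < 1 + 2 * ((k:ℝ) + 1) := by positivity
        positivity
      calc ((ρ j) ^ (-q)) ^ (k + 1) * (1 + 2 * ((k:ℝ) + 1)) ^ (q / 2)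
          ≤ ((ρ j) ^ (-q) * (c ^ q) ^ k) * (1 + 2 * ((k:ℝ) + 1)) ^ (q / 2) :=
            mul_le_mul_of_nonneg_right hpow hnn
        _ = (ρ j) ^ (-q) * ((c ^ q) ^ k * (1 + 2 * ((k:ℝ) + 1)) ^ (q / 2)) := by ring
    calc (∑' k : ℕ, (ρ j) ^ (-(q * ((k+1:ℕ):ℝ))) * (1 + 2 * ((k+1:ℕ) : ℝ)) ^ (q / 2))
        ≤ (ρ j) ^ (-q) * C := htail
      _ = C * (ρ j) ^ (-q) := by ring
  -- S j ≥ 1 and positivity of S j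
  have hSge1 : ∀ j, 1 ≤ ∑' k : ℕ, (ρ j) ^ (-(q * (k:ℝ))) * (1 + 2 * (k : ℝ)) ^ (q / 2) := by
    intro j
    have h0 : (ρ j) ^ (-(q * ((0:ℕ):ℝ))) * (1 + 2 * ((0:ℕ) : ℝ)) ^ (q / 2) = 1 := by norm_num
    calc (1:ℝ) = (ρ j) ^ (-(q * ((0:ℕ):ℝ))) * (1 + 2 * ((0:ℕ) : ℝ)) ^ (q / 2) := h0.symm
      _ ≤ _ := by
          refine Summable.le_tsum (hS j) 0 fun k _ => ?_
          have h1k : (0:ℝ) < 1 + 2 * (k:ℝ) := by positivity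
          have := hr0 j
          have := Real.rpow_pos_of_pos (hρpos j) (-(q * (k:ℝ)))
          positivity
  have hSpos : ∀ j, 0 < ∑' k : ℕ, (ρ j) ^ (-(q * (k:ℝ))) * (1 + 2 * (k : ℝ)) ^ (q / 2) :=
    fun j => lt_of_lt_of_le one_pos (hSge1 j)
  refine ⟨hS, ⟨C, hCpos, hbound⟩, ?_⟩
  -- Multipliability via summability of logs
  have hlog : Summable fun j =>
      Real.log (∑' k : ℕ, (ρ j) ^ (-(q * (k:ℝ))) * (1 + 2 * (k : ℝ)) ^ (q / 2)) := by
    refine Summable.of_nonneg_of_le (fun j => Real.log_nonneg (hSge1 j)) (fun j => ?_)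
      (hsum.mul_left C)
    have h1 := Real.log_le_sub_one_of_pos (hSpos j)
    have h2 := hbound j
    linarith
  exact Real.multipliable_of_summable_log hSpos hlog
end

section
/- Let F be the set of finitely supported multi-indices and (u_ν)_{ν∈F} nonnegative reals. Suppose ρ_j > 1 for all j, (ρ_j^{-1}) ∈ ℓ^q(ℕ) with q = 2p/(2-p) for some 0 < p < 2, and ∑_{ν∈F} a_ν^{-2} ρ^{2ν} u_ν^2 < ∞, where a_ν := ∏_j √(2ν_j + 1). Then ∑_{ν∈F} u_ν^p < ∞. -/
open Finset Real

-- polynomial-times-geometric summability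
lemma aux_geom (a b : ℝ) (ha : 0 ≤ a) (hb : 1 ≤ b) {r : ℝ} (hr0 : 0 < r) (hr1 : r < 1) :
    Summable fun n : ℕ => (2 * (n : ℝ) + b) ^ a * r ^ n := by
  set k := ⌈a⌉₊ with hk
  have hsum : Summable fun n : ℕ => ((n : ℝ) + 1) ^ k * r ^ n := by
    have h1 : Summable fun n : ℕ => (n : ℝ) ^ k * r ^ n :=
      summable_pow_mul_geometric_of_norm_lt_one k (by rwa [Real.norm_eq_abs, abs_of_pos hr0])
    have h2 : Summable fun n : ℕ => ((n : ℝ) + 1) ^ k * r ^ (n + 1) := by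
      have h3 := (summable_nat_add_iff 1).mpr h1
      refine h3.congr fun n => ?_
      push_cast
      ring
    have h4 := h2.mul_left r⁻¹
    refine h4.congr fun n => ?_
    field_simp
    ring
  refine Summable.of_nonneg_of_le (fun n => mul_nonneg (Real.rpow_nonneg (by positivity) _)
    (pow_nonneg hr0.le n)) (fun n => ?_) (hsum.mul_left ((2 + b) ^ k))
  have hn0 : (0:ℝ) ≤ (n:ℝ) := Nat.cast_nonneg n
  have h1n : (1 : ℝ) ≤ 2 * (n : ℝ) + b := by nlinarith
  have step1 : (2 * (n : ℝ) + b) ^ a ≤ (2 * (n : ℝ) + b) ^ (k : ℝ) :=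
    Real.rpow_le_rpow_of_exponent_le h1n (Nat.le_ceil a)
  rw [Real.rpow_natCast] at step1
  have step2 : (2 * (n : ℝ) + b) ^ k ≤ ((2 + b) * ((n : ℝ) + 1)) ^ k :=
    pow_le_pow_left₀ (by linarith) (by nlinarith) k
  rw [mul_pow] at step2
  calc (2 * (n : ℝ) + b) ^ a * r ^ n ≤ (2 + b) ^ k * ((n : ℝ) + 1) ^ k * r ^ n := by
        exact mul_le_mul_of_nonneg_right (step1.trans step2) (pow_nonneg hr0.le n)
    _ = (2 + b) ^ k * (((n : ℝ) + 1) ^ k * r ^ n) := by ring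

lemma aux_geom' (a b : ℝ) (ha : 0 ≤ a) (hb : 1 ≤ b) {r : ℝ} (hr0 : 0 < r) (hr1 : r < 1) :
    Summable fun n : ℕ => Real.sqrt (2 * (n : ℝ) + b) ^ a * r ^ n := by
  refine Summable.of_nonneg_of_le (fun n => mul_nonneg (Real.rpow_nonneg (Real.sqrt_nonneg _) _)
    (pow_nonneg hr0.le n)) (fun n => ?_) (aux_geom a b ha hb hr0 hr1)
  have hn0 : (0:ℝ) ≤ (n:ℝ) := Nat.cast_nonneg n
  have h1n : (1 : ℝ) ≤ 2 * (n : ℝ) + b := by nlinarith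
  refine mul_le_mul_of_nonneg_right ?_ (pow_nonneg hr0.le n)
  exact Real.rpow_le_rpow (Real.sqrt_nonneg _) ((Real.sqrt_le_left (by linarith)).mpr (by nlinarith)) ha


lemma summable_finsupp_prod_s6 (c : ℕ → ℕ → ℝ) (hc0 : ∀ j, c j 0 = 1)
    (hnn : ∀ j n, 0 ≤ c j n) (hcs : ∀ j, Summable (c j))
    (hT : Summable fun j => (∑' n, c j n) - 1) :
    Summable fun ν : ℕ →₀ ℕ => ν.prod fun j n => c j n := by
  classical
  set t : ℕ → ℝ := fun j => (∑' n, c j n) - 1 with ht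
  have htnn : ∀ j, 0 ≤ t j := by
    intro j
    have h1 : c j 0 ≤ ∑' n, c j n := Summable.le_tsum (hcs j) 0 fun n _ => hnn j n
    rw [hc0 j] at h1
    simp only [ht]
    linarith
  refine summable_of_sum_le (c := Real.exp (∑' j, t j)) (fun ν => Finset.prod_nonneg
    fun j _ => hnn j _) (fun S => ?_)
  set J : Finset ℕ := S.sup Finsupp.support with hJ
  set N : ℕ := S.sup fun ν => ν.support.sup ν with hN
  have hsupp : ∀ ν ∈ S, ν.support ⊆ J := fun ν hν => Finset.le_sup hν
  have hval : ∀ ν ∈ S, ∀ j, ν j ≤ N := by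
    intro ν hν j
    by_cases hj : j ∈ ν.support
    · exact (Finset.le_sup hj).trans (Finset.le_sup (f := fun ν : ℕ →₀ ℕ => ν.support.sup ν) hν)
    · simp [Finsupp.notMem_support_iff.mp hj]
  have key : ∀ ν ∈ S, (ν.prod fun j n => c j n) = ∏ j ∈ J, c j (ν j) := fun ν hν =>
    Finsupp.prod_of_support_subset ν (hsupp ν hν) _ fun j _ => hc0 j
  rw [Finset.sum_congr rfl key]
  -- injection into the pi finset
  set e : (ℕ →₀ ℕ) → (∀ j ∈ J, ℕ) := fun ν => fun j _ => ν j with he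
  have hinj : Set.InjOn e S := by
    intro ν₁ h₁ ν₂ h₂ hee
    ext j
    by_cases hj : j ∈ J
    · exact congrFun (congrFun hee j) hj
    · rw [Finsupp.notMem_support_iff.mp fun hc => hj (hsupp ν₁ h₁ hc),
        Finsupp.notMem_support_iff.mp fun hc => hj (hsupp ν₂ h₂ hc)]
  have himg : S.image e ⊆ J.pi fun _ => Finset.range (N + 1) := by
    intro g hg
    rcases Finset.mem_image.mp hg with ⟨ν, hν, rfl⟩
    rw [Finset.mem_pi]
    intro j hj
    exact Finset.mem_range.mpr (Nat.lt_succ_of_le (hval ν hν j))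
  have step1 : ∑ ν ∈ S, ∏ j ∈ J, c j (ν j)
      = ∑ g ∈ S.image e, ∏ x ∈ J.attach, c x.1 (g x.1 x.2) := by
    rw [Finset.sum_image (fun x hx y hy h => hinj hx hy h)]
    refine Finset.sum_congr rfl fun ν hν => ?_
    rw [← Finset.prod_attach J fun j => c j (ν j)]
  have step2 : ∑ g ∈ S.image e, ∏ x ∈ J.attach, c x.1 (g x.1 x.2)
      ≤ ∑ g ∈ J.pi fun _ => Finset.range (N + 1), ∏ x ∈ J.attach, c x.1 (g x.1 x.2) :=
    Finset.sum_le_sum_of_subset_of_nonneg himg fun g _ _ =>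
      Finset.prod_nonneg fun x _ => hnn x.1 _
  have step3 : ∑ g ∈ J.pi fun _ => Finset.range (N + 1), ∏ x ∈ J.attach, c x.1 (g x.1 x.2)
      = ∏ j ∈ J, ∑ n ∈ Finset.range (N + 1), c j n := (Finset.prod_sum _ _ _).symm
  have step4 : ∏ j ∈ J, ∑ n ∈ Finset.range (N + 1), c j n ≤ ∏ j ∈ J, (1 + t j) := by
    refine Finset.prod_le_prod (fun j _ => Finset.sum_nonneg fun n _ => hnn j n) fun j _ => ?_
    have : (1 : ℝ) + t j = ∑' n, c j n := by simp [ht]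
    rw [this]
    exact Summable.sum_le_tsum _ (fun n _ => hnn j n) (hcs j)
  have step5 : ∏ j ∈ J, (1 + t j) ≤ Real.exp (∑' j, t j) := by
    calc ∏ j ∈ J, (1 + t j) ≤ ∏ j ∈ J, Real.exp (t j) :=
          Finset.prod_le_prod (fun j _ => by linarith [htnn j]) fun j _ => by
            linarith [Real.add_one_le_exp (t j)]
      _ = Real.exp (∑ j ∈ J, t j) := (Real.exp_sum J t).symm
      _ ≤ Real.exp (∑' j, t j) := Real.exp_le_exp.mpr (Summable.sum_le_tsum _ (fun j _ => htnn j) hT)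
  linarith [step2, step4.trans step5, step1, step3]


theorem stmt_6 (u : (ℕ →₀ ℕ) → ℝ) (ρ : ℕ → ℝ) (p : ℝ) (hp0 : 0 < p) (hp2 : p < 2)
    (hu : ∀ ν, 0 ≤ u ν) (hρ : ∀ j, 1 < ρ j)
    (hℓq : Summable fun j => (ρ j) ^ (-(2 * p / (2 - p))))
    (hweighted : Summable fun ν : ℕ →₀ ℕ =>
      (ν.prod fun j n => Real.sqrt (2 * n + 1))⁻¹ ^ 2 *
        (ν.prod fun j n => ρ j ^ n) ^ 2 * (u ν) ^ 2) :
    Summable fun ν : ℕ →₀ ℕ => (u ν) ^ p := by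
  have h2p : (0:ℝ) < 2 - p := by linarith
  set q : ℝ := 2 * p / (2 - p) with hq
  have hq0 : 0 < q := by positivity
  have hρ0 : ∀ j, (0:ℝ) < ρ j := fun j => lt_trans one_pos (hρ j)
  set r : ℕ → ℝ := fun j => ρ j ^ (-q) with hr
  have hr0 : ∀ j, 0 < r j := fun j => Real.rpow_pos_of_pos (hρ0 j) _
  have hr1 : ∀ j, r j < 1 := fun j =>
    Real.rpow_lt_one_of_one_lt_of_neg (hρ j) (by linarith)
  set c : ℕ → ℕ → ℝ := fun j n => Real.sqrt (2 * (n:ℝ) + 1) ^ q * r j ^ n with hc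
  have hc0 : ∀ j, c j 0 = 1 := by
    intro j; simp [hc, Real.one_rpow]
  have hnn : ∀ j n, 0 ≤ c j n := fun j n =>
    mul_nonneg (Real.rpow_nonneg (Real.sqrt_nonneg _) _) (pow_nonneg (hr0 j).le n)
  have hcs : ∀ j, Summable (c j) := fun j => aux_geom' q 1 hq0.le le_rfl (hr0 j) (hr1 j)
  -- summability of the tails
  have hKsum : Summable fun n : ℕ => Real.sqrt (2 * (n:ℝ) + 3) ^ q * (1/2 : ℝ) ^ n :=
    aux_geom' q 3 hq0.le (by norm_num) (by norm_num) (by norm_num)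
  set K : ℝ := ∑' n : ℕ, Real.sqrt (2 * (n:ℝ) + 3) ^ q * (1/2 : ℝ) ^ n with hK
  have hrsum : Summable r := hℓq
  have hT : Summable fun j => (∑' n, c j n) - 1 := by
    refine Summable.of_norm_bounded_eventually_nat (hrsum.mul_left K) ?_
    have hev : ∀ᶠ j in Filter.atTop, r j < 1/2 :=
      hrsum.tendsto_atTop_zero.eventually (gt_mem_nhds (by norm_num))
    filter_upwards [hev] with j hj
    have hshift : Summable fun n : ℕ => c j (n + 1) := (summable_nat_add_iff 1).mpr (hcs j)
    have htj : (∑' n, c j n) - 1 = ∑' n : ℕ, c j (n + 1) := by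
      rw [Summable.tsum_eq_zero_add (hcs j), hc0 j]; ring
    have hbound : ∀ n : ℕ, c j (n + 1) ≤ Real.sqrt (2 * (n:ℝ) + 3) ^ q * (1/2 : ℝ) ^ n * r j := by
      intro n
      have h1 : Real.sqrt (2 * ((n:ℕ) + 1 : ℕ) + 1) = Real.sqrt (2 * (n:ℝ) + 3) := by
        push_cast; ring_nf
      have h2 : r j ^ (n + 1) ≤ (1/2 : ℝ) ^ n * r j := by
        rw [pow_succ]
        exact mul_le_mul_of_nonneg_right (pow_le_pow_left₀ (hr0 j).le hj.le n) (hr0 j).le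
      calc c j (n + 1) = Real.sqrt (2 * (n:ℝ) + 3) ^ q * r j ^ (n + 1) := by
            rw [hc]; push_cast; ring_nf
        _ ≤ Real.sqrt (2 * (n:ℝ) + 3) ^ q * ((1/2 : ℝ) ^ n * r j) :=
            mul_le_mul_of_nonneg_left h2 (Real.rpow_nonneg (Real.sqrt_nonneg _) _)
        _ = Real.sqrt (2 * (n:ℝ) + 3) ^ q * (1/2 : ℝ) ^ n * r j := by ring
    have htnn : 0 ≤ ∑' n : ℕ, c j (n + 1) := tsum_nonneg fun n => hnn j (n + 1)
    rw [Real.norm_eq_abs, htj, abs_of_nonneg htnn]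
    calc ∑' n : ℕ, c j (n + 1) ≤ ∑' n : ℕ, Real.sqrt (2 * (n:ℝ) + 3) ^ q * (1/2 : ℝ) ^ n * r j :=
          Summable.tsum_le_tsum hbound hshift (hKsum.mul_right (r j))
      _ = K * r j := by rw [tsum_mul_right]
  have hprod : Summable fun ν : ℕ →₀ ℕ => ν.prod fun j n => c j n :=
    summable_finsupp_prod_s6 c hc0 hnn hcs hT
  -- now the Young inequality comparison
  set a : (ℕ →₀ ℕ) → ℝ := fun ν => ν.prod fun j n => Real.sqrt (2 * n + 1) with haa
  set b : (ℕ →₀ ℕ) → ℝ := fun ν => ν.prod fun j n => ρ j ^ n with hbb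
  have ha0 : ∀ ν, 0 < a ν := fun ν => Finset.prod_pos fun j _ =>
    Real.sqrt_pos.mpr (by positivity)
  have hb0 : ∀ ν, 0 < b ν := fun ν => Finset.prod_pos fun j _ => pow_pos (hρ0 j) _
  have conj : (2/p).HolderConjugate (2/(2-p)) :=
    Real.holderConjugate_iff.mpr ⟨by rw [lt_div_iff₀ hp0]; linarith, by rw [inv_div, inv_div]; ring⟩
  have keyineq : ∀ ν, u ν ^ p ≤
      (p/2) * ((a ν)⁻¹ ^ 2 * (b ν) ^ 2 * u ν ^ 2) + ((2-p)/2) * (ν.prod fun j n => c j n) := by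
    intro ν
    set A : ℝ := (a ν)⁻¹ * b ν * u ν with hA
    set B : ℝ := a ν / b ν with hB
    have hA0 : 0 ≤ A := mul_nonneg (mul_nonneg (inv_nonneg.mpr (ha0 ν).le) (hb0 ν).le) (hu ν)
    have hB0 : 0 ≤ B := div_nonneg (ha0 ν).le (hb0 ν).le
    have hAB : A * B = u ν := by
      rw [hA, hB]
      field_simp [(ha0 ν).ne', (hb0 ν).ne']
    have young := Real.young_inequality_of_nonneg (Real.rpow_nonneg hA0 p)
      (Real.rpow_nonneg hB0 p) conj
    have e1 : u ν ^ p = A ^ p * B ^ p := by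
      rw [← hAB, Real.mul_rpow hA0 hB0]
    have e2 : (A ^ p) ^ (2/p) = (a ν)⁻¹ ^ 2 * (b ν) ^ 2 * u ν ^ 2 := by
      rw [← Real.rpow_mul hA0]
      have hp2' : p * (2/p) = ((2:ℕ):ℝ) := by push_cast; field_simp
      rw [hp2', Real.rpow_natCast, hA, mul_pow, mul_pow]
    have e3 : (B ^ p) ^ (2/(2-p)) = ν.prod fun j n => c j n := by
      have h1 : (B ^ p) ^ (2/(2-p)) = B ^ q := by
        rw [← Real.rpow_mul hB0]
        congr 1
        rw [hq]
        field_simp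
      rw [h1, hB, haa, hbb]
      simp only [Finsupp.prod]
      rw [← Finset.prod_div_distrib,
        (Real.finset_prod_rpow ν.support _
          (fun j _ => div_nonneg (Real.sqrt_nonneg _) (pow_nonneg (hρ0 j).le _)) q).symm]
      refine Finset.prod_congr rfl fun j _ => ?_
      rw [Real.div_rpow (Real.sqrt_nonneg _) (pow_nonneg (hρ0 j).le _),
        ← Real.rpow_natCast (ρ j) (ν j), ← Real.rpow_mul (hρ0 j).le,
        mul_comm ((ν j : ℕ) : ℝ) q, Real.rpow_mul (hρ0 j).le, Real.rpow_natCast,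
        div_eq_mul_inv, ← inv_pow, ← Real.rpow_neg (hρ0 j).le]
    calc u ν ^ p = A ^ p * B ^ p := e1
      _ ≤ (A ^ p) ^ (2/p) / (2/p) + (B ^ p) ^ (2/(2-p)) / (2/(2-p)) := young
      _ = (p/2) * ((a ν)⁻¹ ^ 2 * (b ν) ^ 2 * u ν ^ 2)
          + ((2-p)/2) * (ν.prod fun j n => c j n) := by
        rw [e2, e3, div_div_eq_mul_div, div_div_eq_mul_div]
        ring
  refine Summable.of_nonneg_of_le (fun ν => Real.rpow_nonneg (hu ν) p) keyineq ?_
  exact (hweighted.mul_left (p/2)).add (hprod.mul_left ((2-p)/2))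
end

section
/- In the sharpness example of Section 4.1: let D_j ⊂ ]0,1[ have midpoint m_j, ψ_j = b_j · χ_{[l_j, m_j]}, h_j the hat function on D_j, and suppose t ∈ H¹₀(]0,1[) satisfies ∫₀¹ t'(x) v'(x) dx = −∫₀¹ ψ_j(x) c_j h_j'(x) v'(x) dx for all v ∈ H¹₀(]0,1[), where c_j > 0 and b_j > 0. Then ‖t‖_{H¹₀} := (∫₀¹ |t'|² dx)^{1/2} ≥ b_j c_j / √|D_j|. -/
open MeasureTheory

theorem stmt_14 (l r b c : ℝ) (hl : 0 < l) (hlr : l < r) (hr : r < 1)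
    (hb : 0 < b) (hc : 0 < c)
    (m L : ℝ) (hm : m = (l + r) / 2) (hL : L = r - l)
    (ψ g dt : ℝ → ℝ)
    (hψ : ∀ x, ψ x = if l ≤ x ∧ x ≤ m then b else 0)
    (hg : ∀ x, g x = if l < x ∧ x < m then 2 / L
      else if m < x ∧ x < r then -(2 / L) else 0)
    (hdt : IntervalIntegrable (fun x => (dt x) ^ 2) volume 0 1)
    (hvar : ∀ v dv : ℝ → ℝ, ContinuousOn v (Set.Icc 0 1) → v 0 = 0 → v 1 = 0 →
      (∀ x ∈ Set.Ioo (0:ℝ) 1 \ {l, m, r}, HasDerivAt v (dv x) x) →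
      IntervalIntegrable (fun x => (dv x) ^ 2) volume 0 1 →
      ∫ x in (0:ℝ)..1, dt x * dv x = -∫ x in (0:ℝ)..1, ψ x * (c * g x) * dv x) :
    b * c / Real.sqrt L ≤ Real.sqrt (∫ x in (0:ℝ)..1, (dt x) ^ 2) := by
  have hLpos : 0 < L := by rw [hL]; linarith
  have hlm : l < m := by rw [hm]; linarith
  have hmr : m < r := by rw [hm]; linarith
  -- the test (hat) function
  set v : ℝ → ℝ := fun x => max 0 (min (2 * (x - l) / L) (2 * (r - x) / L)) with hv
  have hvcont : ContinuousOn v (Set.Icc 0 1) :=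
    (continuous_const.max ((by fun_prop : Continuous fun x : ℝ => 2 * (x - l) / L).min
      (by fun_prop))).continuousOn
  have hv0 : v 0 = 0 := by
    have : min (2 * ((0:ℝ) - l) / L) (2 * (r - 0) / L) ≤ 2 * ((0:ℝ) - l) / L := min_le_left _ _
    have h2 : 2 * ((0:ℝ) - l) / L < 0 := by
      apply div_neg_of_neg_of_pos _ hLpos; linarith
    simp only [hv]
    rw [max_eq_left]
    linarith [min_le_left (2 * ((0:ℝ) - l) / L) (2 * (r - 0) / L)]
  have hv1 : v 1 = 0 := by
    have h2 : 2 * (r - (1:ℝ)) / L < 0 := by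
      apply div_neg_of_neg_of_pos _ hLpos; linarith
    simp only [hv]
    rw [max_eq_left]
    linarith [min_le_right (2 * ((1:ℝ) - l) / L) (2 * (r - 1) / L)]
  -- the derivative of v off {l, m, r}
  have hvderiv : ∀ x ∈ Set.Ioo (0:ℝ) 1 \ {l, m, r}, HasDerivAt v (g x) x := by
    rintro x ⟨⟨hx0, hx1⟩, hxne⟩
    simp only [Set.mem_insert_iff, Set.mem_singleton_iff, not_or] at hxne
    obtain ⟨hxl, hxm, hxr⟩ := hxne
    rcases lt_or_gt_of_ne hxl with hxl | hxl
    · -- x < l : v = 0 near x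
      have hzero : HasDerivAt (fun _ : ℝ => (0:ℝ)) 0 x := hasDerivAt_const x 0
      have hev : v =ᶠ[nhds x] fun _ => (0:ℝ) := by
        filter_upwards [Iio_mem_nhds hxl] with y hy
        have : 2 * (y - l) / L < 0 := div_neg_of_neg_of_pos (by simp at hy; linarith) hLpos
        simp only [hv]
        rw [max_eq_left]
        linarith [min_le_left (2 * (y - l) / L) (2 * (r - y) / L)]
      have hgx : g x = 0 := by rw [hg]; rw [if_neg, if_neg] <;> push_neg <;> intro h <;> linarith
      rw [hgx]
      exact hzero.congr_of_eventuallyEq hev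
    rcases lt_or_gt_of_ne hxm with hxm | hxm
    · -- l < x < m : v = 2(y-l)/L near x
      have hlin : HasDerivAt (fun y : ℝ => 2 * (y - l) / L) (2 / L) x := by
        simpa using (((hasDerivAt_id x).sub_const l).const_mul 2).div_const L
      have hev : v =ᶠ[nhds x] fun y => 2 * (y - l) / L := by
        filter_upwards [Ioo_mem_nhds hxl hxm] with y hy
        obtain ⟨hy1, hy2⟩ := hy
        have hmin : 2 * (y - l) / L ≤ 2 * (r - y) / L := by
          apply div_le_div_of_nonneg_right _ hLpos.le
          rw [hm] at hy2; linarith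
        simp only [hv]
        rw [min_eq_left hmin, max_eq_right (div_nonneg (by linarith) hLpos.le)]
      have hgx : g x = 2 / L := by rw [hg, if_pos ⟨hxl, hxm⟩]
      rw [hgx]
      exact hlin.congr_of_eventuallyEq hev
    rcases lt_or_gt_of_ne hxr with hxr | hxr
    · -- m < x < r : v = 2(r-y)/L near x
      have hlin : HasDerivAt (fun y : ℝ => 2 * (r - y) / L) (-(2 / L)) x := by
        have h := (((hasDerivAt_id x).const_sub r).const_mul 2).div_const L
        rw [show -(2 / L) = 2 * -1 / L by ring]
        exact h
      have hev : v =ᶠ[nhds x] fun y => 2 * (r - y) / L := by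
        filter_upwards [Ioo_mem_nhds hxm hxr] with y hy
        obtain ⟨hy1, hy2⟩ := hy
        have hmin : 2 * (r - y) / L ≤ 2 * (y - l) / L := by
          apply div_le_div_of_nonneg_right _ hLpos.le
          rw [hm] at hy1; linarith
        simp only [hv]
        rw [min_eq_right hmin, max_eq_right (div_nonneg (by linarith) hLpos.le)]
      have hgx : g x = -(2 / L) := by
        rw [hg, if_neg, if_pos ⟨hxm, hxr⟩]; push_neg; intro h; linarith
      rw [hgx]
      exact hlin.congr_of_eventuallyEq hev
    · -- r < x : v = 0 near x
      have hzero : HasDerivAt (fun _ : ℝ => (0:ℝ)) 0 x := hasDerivAt_const x 0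
      have hev : v =ᶠ[nhds x] fun _ => (0:ℝ) := by
        filter_upwards [Ioi_mem_nhds hxr] with y hy
        have : 2 * (r - y) / L < 0 := div_neg_of_neg_of_pos (by simp at hy; linarith) hLpos
        simp only [hv]
        rw [max_eq_left]
        linarith [min_le_right (2 * (y - l) / L) (2 * (r - y) / L)]
      have hgx : g x = 0 := by rw [hg]; rw [if_neg, if_neg] <;> push_neg <;> intro h <;> linarith
      rw [hgx]
      exact hzero.congr_of_eventuallyEq hev
  -- g^2 as an indicator
  have hg2 : (fun x => (g x) ^ 2) =
      (Set.Ioo l m ∪ Set.Ioo m r).indicator (fun _ => (2 / L) ^ 2) := by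
    funext x
    rw [hg]
    by_cases h1 : l < x ∧ x < m
    · rw [if_pos h1, Set.indicator_of_mem (Set.mem_union_left _ (Set.mem_Ioo.2 h1))]
    · rw [if_neg h1]
      by_cases h2 : m < x ∧ x < r
      · rw [if_pos h2, Set.indicator_of_mem (Set.mem_union_right _ (Set.mem_Ioo.2 h2))]
        ring
      · rw [if_neg h2, Set.indicator_of_notMem (by
          simp only [Set.mem_union, Set.mem_Ioo]; push_neg
          exact ⟨fun hx => by by_contra hx'; exact h1 ⟨hx, lt_of_not_ge hx'⟩,
            fun hx => by by_contra hx'; exact h2 ⟨hx, lt_of_not_ge hx'⟩⟩)]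
        norm_num
  have hg2int : IntervalIntegrable (fun x => (g x) ^ 2) volume 0 1 := by
    rw [hg2]
    have : Integrable ((Set.Ioo l m ∪ Set.Ioo m r).indicator (fun _ => (2 / L) ^ 2)) volume := by
      rw [integrable_indicator_iff ((measurableSet_Ioo).union measurableSet_Ioo)]
      exact integrableOn_const (lt_of_le_of_lt (measure_union_le _ _)
        (ENNReal.add_lt_top.2 ⟨measure_Ioo_lt_top, measure_Ioo_lt_top⟩)).ne
    exact this.intervalIntegrable
  -- ∫ g^2 = 4 / L
  have hIg2 : ∫ x in (0:ℝ)..1, (g x) ^ 2 = 4 / L := by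
    rw [hg2, intervalIntegral.integral_of_le (by norm_num : (0:ℝ) ≤ 1)]
    rw [setIntegral_indicator ((measurableSet_Ioo).union measurableSet_Ioo)]
    have hsub : Set.Ioc (0:ℝ) 1 ∩ (Set.Ioo l m ∪ Set.Ioo m r) = Set.Ioo l m ∪ Set.Ioo m r := by
      apply Set.inter_eq_right.2
      intro x hx
      rcases hx with hx | hx <;> exact ⟨by cases hx; linarith, by cases hx; linarith⟩
    rw [hsub, setIntegral_const]
    have hdisj : Disjoint (Set.Ioo l m) (Set.Ioo m r) := by
      apply Set.disjoint_left.2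
      rintro x ⟨_, h1⟩ ⟨h2, _⟩; linarith
    rw [measureReal_union hdisj measurableSet_Ioo measure_Ioo_lt_top.ne measure_Ioo_lt_top.ne]
    rw [Real.volume_real_Ioo_of_le (by linarith), Real.volume_real_Ioo_of_le (by linarith), smul_eq_mul]
    have : m - l + (r - m) = L := by rw [hL]; ring
    rw [this]
    field_simp
    ring
  -- ψ * (c g) * g as an indicator
  have hpsig : (fun x => ψ x * (c * g x) * g x) =
      (Set.Ioo l m).indicator (fun _ => b * (c * (2 / L)) * (2 / L)) := by
    funext x
    by_cases h1 : l < x ∧ x < m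
    · rw [Set.indicator_of_mem (Set.mem_Ioo.2 h1), hψ, hg,
        if_pos ⟨le_of_lt h1.1, le_of_lt h1.2⟩, if_pos h1]
    · rw [Set.indicator_of_notMem (fun hx => h1 (Set.mem_Ioo.1 hx)), hψ, hg]
      by_cases hQ : m < x ∧ x < r
      · rw [if_neg (fun hx : l ≤ x ∧ x ≤ m => absurd hQ.1 (not_lt.2 hx.2)),
          if_neg h1, if_pos hQ]
        ring
      · rw [if_neg h1, if_neg hQ]
        ring
  -- ∫ ψ (c g) g = 2 b c / L
  have hIrhs : ∫ x in (0:ℝ)..1, ψ x * (c * g x) * g x = 2 * b * c / L := by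
    rw [hpsig, intervalIntegral.integral_of_le (by norm_num : (0:ℝ) ≤ 1)]
    rw [setIntegral_indicator measurableSet_Ioo]
    have hsub : Set.Ioc (0:ℝ) 1 ∩ Set.Ioo l m = Set.Ioo l m := by
      apply Set.inter_eq_right.2
      rintro x ⟨h1, h2⟩; exact ⟨by linarith, by linarith⟩
    rw [hsub, setIntegral_const, Real.volume_real_Ioo_of_le (by linarith), smul_eq_mul]
    have hml : m - l = L / 2 := by rw [hm, hL]; ring
    rw [hml]; field_simp
  -- apply the variational equation
  have key : ∫ x in (0:ℝ)..1, dt x * g x = -(2 * b * c / L) := by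
    rw [hvar v g hvcont hv0 hv1 hvderiv hg2int, hIrhs]
  -- integrability of dt * g
  have hdtg : IntervalIntegrable (fun x => dt x * g x) volume 0 1 := by
    by_contra h
    rw [intervalIntegral.integral_undef h] at key
    have : (0:ℝ) < 2 * b * c / L := by positivity
    linarith [key]
  -- Cauchy–Schwarz by expanding a square
  set A := ∫ x in (0:ℝ)..1, (dt x) ^ 2 with hA
  set B : ℝ := 4 / L with hB
  set C : ℝ := -(2 * b * c / L) with hC
  have hBpos : 0 < B := by rw [hB]; positivity
  have hnn : 0 ≤ ∫ x in (0:ℝ)..1, (B * dt x - C * g x) ^ 2 :=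
    intervalIntegral.integral_nonneg (by norm_num) (fun u _ => sq_nonneg _)
  have hexp : ∫ x in (0:ℝ)..1, (B * dt x - C * g x) ^ 2 =
      B ^ 2 * A - (2 * B * C) * (∫ x in (0:ℝ)..1, dt x * g x)
        + C ^ 2 * (∫ x in (0:ℝ)..1, (g x) ^ 2) := by
    have hcong : ∀ x ∈ Set.uIcc (0:ℝ) 1, (B * dt x - C * g x) ^ 2 =
        B ^ 2 * (dt x) ^ 2 - (2 * B * C) * (dt x * g x) + C ^ 2 * (g x) ^ 2 :=
      fun x _ => by ring
    rw [intervalIntegral.integral_congr hcong]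
    rw [intervalIntegral.integral_add (((hdt.const_mul _).sub (hdtg.const_mul _)))
      (hg2int.const_mul _)]
    rw [intervalIntegral.integral_sub (hdt.const_mul _) (hdtg.const_mul _)]
    rw [intervalIntegral.integral_const_mul, intervalIntegral.integral_const_mul,
      intervalIntegral.integral_const_mul]
  rw [hexp, key, hIg2] at hnn
  -- hence C^2 ≤ B * A, i.e., b^2 c^2 / L ≤ A
  have hCS : C ^ 2 ≤ B * A := by nlinarith [hnn, hBpos]
  have hAlow : b ^ 2 * c ^ 2 / L ≤ A := by
    have hC2 : C ^ 2 = 4 * (b ^ 2 * c ^ 2) / L ^ 2 := by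
      rw [hC]; field_simp; ring
    rw [hC2, hB] at hCS
    have h := mul_le_mul_of_nonneg_right hCS (sq_nonneg L)
    have e1 : 4 * (b ^ 2 * c ^ 2) / L ^ 2 * L ^ 2 = 4 * (b ^ 2 * c ^ 2) := by
      field_simp
    have e2 : 4 / L * A * L ^ 2 = 4 * A * L := by
      field_simp
    rw [e1, e2] at h
    rw [div_le_iff₀ hLpos]
    linarith
  calc b * c / Real.sqrt L = Real.sqrt (b ^ 2 * c ^ 2 / L) := by
        rw [Real.sqrt_div (by positivity) L,
          show b ^ 2 * c ^ 2 = (b * c) ^ 2 by ring, Real.sqrt_sq (by positivity)]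
    _ ≤ Real.sqrt A := Real.sqrt_le_sqrt hAlow
end
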